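/- With notation as in the random block construction: for a fixed set I ⊆ B of size t, the probability that I is an independent set in the random graph F equals the product over a ∈ A of 2^{1 - t_a} (taking the factor to be 1 when t_a = 0), where t_a = |I ∩ N(a)|. Hence the expected number of independent sets of size t in F is at most C(|B|, t) · max over t-sets I of ∏_{a ∈ A, t_a ≥ 1} 2^{1 - t_a}. -/
import Mathlib


open Finset


lemma aux_card_const_on {B : Type*} [Fintype B] [DecidableEq B] (s : Finset B) (c : Bool) :
    (univ.filter fun g : B → Bool => ∀ b ∈ s, g b = c).card = 2 ^ (Fintype.card B - s.card) := by
  rw [← Fintype.card_subtype]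
  have e : {g : B → Bool // ∀ b ∈ s, g b = c} ≃ ((↑(sᶜ : Finset B) : Type _) → Bool) :=
    { toFun := fun g x => g.1 x
      invFun := fun h => ⟨fun b => if hb : b ∈ s then c else h ⟨b, by simpa using hb⟩,
        fun b hb => dif_pos hb⟩
      left_inv := by
        rintro ⟨g, hg⟩
        ext b
        by_cases hb : b ∈ s
        · simp [hb, hg b hb]
        · simp [hb]
      right_inv := by
        intro h
        ext ⟨b, hb⟩
        have : b ∉ s := by simpa using hb
        simp [this] }
  rw [Fintype.card_congr e]
  simp [card_compl]

lemma aux_card_pi {A B : Type*} [Fintype A] [DecidableEq A] [Fintype B] [DecidableEq B]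
    (p : A → (B → Bool) → Prop) [∀ a g, Decidable (p a g)] :
    (univ.filter fun f : A → B → Bool => ∀ a, p a (f a)).card
      = ∏ a, (univ.filter fun g => p a g).card := by
  rw [← Fintype.card_subtype, Fintype.card_congr (Equiv.subtypePiEquivPi), Fintype.card_pi]
  simp [Fintype.card_subtype]

lemma aux_count {B : Type*} [Fintype B] [DecidableEq B] (s : Finset B) :
    ((univ.filter fun g : B → Bool =>
        (∀ b ∈ s, g b = true) ∨ (∀ b ∈ s, g b = false)).card : ℚ) / 2 ^ Fintype.card B
      = if s.card = 0 then (1 : ℚ) else 2 ^ ((1 : ℤ) - (s.card : ℤ)) := by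
  have hle : s.card ≤ Fintype.card B := s.card_le_univ
  by_cases hs : s.card = 0
  · have : s = ∅ := card_eq_zero.mp hs
    subst this
    simp [div_self, (pow_pos (by norm_num : (0:ℚ) < 2) (Fintype.card B)).ne']
  · have hne : s.Nonempty := card_pos.mp (Nat.pos_of_ne_zero hs)
    have hdisj : Disjoint (univ.filter fun g : B → Bool => ∀ b ∈ s, g b = true)
        (univ.filter fun g : B → Bool => ∀ b ∈ s, g b = false) := by
      rw [disjoint_left]
      intro g hg hg'
      obtain ⟨b, hb⟩ := hne
      have h1 := (mem_filter.mp hg).2 b hb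
      have h2 := (mem_filter.mp hg').2 b hb
      simp [h1] at h2
    have hcard : (univ.filter fun g : B → Bool =>
        (∀ b ∈ s, g b = true) ∨ (∀ b ∈ s, g b = false)).card
        = 2 ^ (Fintype.card B - s.card + 1) := by
      rw [filter_or, card_union_of_disjoint hdisj, aux_card_const_on, aux_card_const_on]
      ring
    rw [hcard, if_neg hs]
    push_cast
    rw [← zpow_natCast (2:ℚ) (Fintype.card B - s.card + 1), ← zpow_natCast (2:ℚ) (Fintype.card B),
      ← zpow_sub₀ (by norm_num : (2:ℚ) ≠ 0)]
    congr 1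
    push_cast [Nat.cast_sub hle]
    ring


/-- Random block construction, probability computation.  `Nbr a ⊆ B` is the neighborhood
of `a ∈ A`; a uniformly random assignment `f : A → B → Bool` splits each neighborhood into
two sides independently across `a ∈ A`.  A set `I ⊆ B` is independent in the resulting
graph iff for every `a`, the set `I ∩ Nbr a` lies entirely on one side.  The probability
of this is `∏_a 2^{1 - t_a}` where `t_a = |I ∩ Nbr a|` (factor `1` when `t_a = 0`), and
hence the expected number of independent `t`-sets is at most `C(|B|, t) · M` for any `M`
bounding all these products over `t`-sets `I`. -/
theorem stmt_9 {A B : Type*} [Fintype A] [DecidableEq A] [Fintype B] [DecidableEq B]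
    (Nbr : A → Finset B) (t : ℕ) (M : ℚ)
    (hM : ∀ I : Finset B, I.card = t →
      (∏ a : A, if (I ∩ Nbr a).card = 0 then (1 : ℚ)
        else 2 ^ ((1 : ℤ) - ((I ∩ Nbr a).card : ℤ))) ≤ M) :
    (∀ I : Finset B,
      ((Finset.univ.filter fun f : A → B → Bool =>
          ∀ a, (∀ b ∈ I ∩ Nbr a, f a b = true) ∨ (∀ b ∈ I ∩ Nbr a, f a b = false)).card : ℚ) /
        (Fintype.card (A → B → Bool)) =
      ∏ a : A, if (I ∩ Nbr a).card = 0 then (1 : ℚ)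
        else 2 ^ ((1 : ℤ) - ((I ∩ Nbr a).card : ℤ))) ∧
    (∑ I ∈ Finset.univ.powersetCard t,
      ((Finset.univ.filter fun f : A → B → Bool =>
          ∀ a, (∀ b ∈ I ∩ Nbr a, f a b = true) ∨ (∀ b ∈ I ∩ Nbr a, f a b = false)).card : ℚ) /
        (Fintype.card (A → B → Bool))) ≤
      (Nat.choose (Fintype.card B) t : ℚ) * M := by

  have key : ∀ I : Finset B,
      ((Finset.univ.filter fun f : A → B → Bool =>
          ∀ a, (∀ b ∈ I ∩ Nbr a, f a b = true) ∨ (∀ b ∈ I ∩ Nbr a, f a b = false)).card : ℚ) /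
        (Fintype.card (A → B → Bool)) =
      ∏ a : A, if (I ∩ Nbr a).card = 0 then (1 : ℚ)
        else 2 ^ ((1 : ℤ) - ((I ∩ Nbr a).card : ℤ)) := by
    intro I
    rw [aux_card_pi (fun a g => (∀ b ∈ I ∩ Nbr a, g b = true) ∨ (∀ b ∈ I ∩ Nbr a, g b = false))]
    have hcardfun : (Fintype.card (A → B → Bool) : ℚ)
        = ∏ _a : A, ((2 : ℚ) ^ Fintype.card B) := by
      simp [Fintype.card_fun, prod_const]
    rw [hcardfun]
    push_cast
    rw [← prod_div_distrib]
    exact Finset.prod_congr rfl fun a _ => aux_count (I ∩ Nbr a)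
  refine ⟨key, ?_⟩
  calc (∑ I ∈ Finset.univ.powersetCard t,
      ((Finset.univ.filter fun f : A → B → Bool =>
          ∀ a, (∀ b ∈ I ∩ Nbr a, f a b = true) ∨ (∀ b ∈ I ∩ Nbr a, f a b = false)).card : ℚ) /
        (Fintype.card (A → B → Bool)))
      ≤ ∑ _I ∈ Finset.univ.powersetCard t, M := by
        refine Finset.sum_le_sum fun I hI => ?_
        rw [key I]
        exact hM I (Finset.mem_powersetCard_univ.mp hI)
    _ = (Nat.choose (Fintype.card B) t : ℚ) * M := by
        rw [Finset.sum_const, Finset.card_powersetCard, Finset.card_univ, nsmul_eq_mul]
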